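/- Let ≺ be a left-invariant order on a group Γ and suppose there is a nonzero linear functional f : ℝ² → ℝ and an embedding of ℤ² into Γ such that f(v) > 0 implies v̄ ≻ e for all v ∈ ℤ². If T ∈ SL(2,ℤ) is a hyperbolic matrix with eigenvalues α₁ > 1 > α₂ > 0 and eigenvectors v₁, v₂ with f(v₁) > 0, and ≺ is recurrent for every cyclic subgroup with respect to the element T̄ conjugating by T, then for every v ∈ ℤ² with f(v) > 0 one has g(v) ≥ 0, where g is the linear functional with g(v₁) = 1, g(v₂) = 0; hence ker f = ker g is an eigenspace of T. -/

import Mathlib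

/-- `r` is a left-invariant (strict total) order on the group `Γ`. -/
def IsLeftInvariantOrder {Γ : Type*} [Group Γ] (r : Γ → Γ → Prop) : Prop :=
  (∀ a, ¬ r a a) ∧ (∀ a b c, r a b → r b c → r a c) ∧
  (∀ a b, a ≠ b → r a b ∨ r b a) ∧ (∀ γ a b, r a b → r (γ * a) (γ * b))

/-- The order `r` is recurrent for every cyclic subgroup: for every `γ` and
every increasing chain `λ₁ ≺ ⋯ ≺ λ_r` there exist arbitrarily large positive
integers `n` with `λ₁γⁿ ≺ ⋯ ≺ λ_rγⁿ`. -/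
def IsRecurrentOrder {Γ : Type*} [Group Γ] (r : Γ → Γ → Prop) : Prop :=
  ∀ (γ : Γ) (k : ℕ) (lam : Fin k → Γ),
    (∀ i j : Fin k, i < j → r (lam i) (lam j)) →
    ∀ N : ℕ, ∃ n : ℕ, N ≤ n ∧ 0 < n ∧
      ∀ i j : Fin k, i < j → r (lam i * γ ^ n) (lam j * γ ^ n)

/-- The key eigenvalue estimate in the example: positivity of `f` on the
positive cone forces `g ≥ 0` there, so `ker f = ker g` is a `T`-invariant line
(an eigenspace of `T`). -/
lemma castVec (M : Matrix (Fin 2) (Fin 2) ℤ) (v : Fin 2 → ℤ) :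
    (fun i => ((M.mulVec v) i : ℝ)) = (M.map (Int.cast : ℤ → ℝ)).mulVec (fun i => (v i : ℝ)) := by
  funext i
  simp [Matrix.mulVec, dotProduct, Matrix.map_apply]

lemma half_div_mul (a b : ℝ) (hb : b ≠ 0) : a / (2 * b) * b = a / 2 := by
  rw [div_mul_eq_mul_div, mul_comm 2 b, ← div_div, mul_div_assoc, div_self hb, mul_one]

lemma castPow (M : Matrix (Fin 2) (Fin 2) ℤ) (n : ℕ) :
    (M ^ n).map (Int.cast : ℤ → ℝ) = (M.map (Int.cast : ℤ → ℝ)) ^ n := by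
  have h : ∀ A : Matrix (Fin 2) (Fin 2) ℤ, A.map (Int.cast : ℤ → ℝ) = (Int.castRingHom ℝ).mapMatrix A := fun A => rfl
  rw [h, h, map_pow]

lemma density_step (f g : (Fin 2 → ℝ) →ₗ[ℝ] ℝ) (v₁ v₂ : Fin 2 → ℝ)
    (hfv₁ : 0 < f v₁) (hg₁ : g v₁ = 1) (hg₂ : g v₂ = 0)
    (part1 : ∀ v : Fin 2 → ℤ, 0 < f (fun i => (v i : ℝ)) → 0 ≤ g (fun i => (v i : ℝ))) :
    f v₂ = 0 := by
  by_contra hc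
  set s : ℝ := if 0 < f v₂ then 1 else -1 with hs
  have hsf : s * f v₂ = |f v₂| := by
    rcases (Ne.lt_or_gt hc) with h | h
    · rw [hs, if_neg (not_lt.2 h.le), abs_of_neg h]; ring
    · rw [hs, if_pos h, abs_of_pos h, one_mul]
  set ε : ℝ := |f v₂| / (2 * f v₁) with hεdef
  have hε : 0 < ε := div_pos (abs_pos.2 hc) (by linarith)
  set x₀ : Fin 2 → ℝ := s • v₂ - ε • v₁ with hx₀
  have hεval : ε * f v₁ = |f v₂| / 2 := by
    rw [hεdef]; exact half_div_mul _ _ (ne_of_gt hfv₁)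
  have hfx₀ : f x₀ = |f v₂| / 2 := by
    have h1 : f x₀ = s * f v₂ - ε * f v₁ := by simp [hx₀]
    rw [h1, hsf, hεval]; ring
  have hfx₀pos : 0 < f x₀ := by rw [hfx₀]; positivity
  have hgx₀ : g x₀ = -ε := by
    simp [hx₀, hg₁, hg₂]
  set e0 : Fin 2 → ℝ := fun j => if (0 : Fin 2) = j then 1 else 0 with he0
  set e1 : Fin 2 → ℝ := fun j => if (1 : Fin 2) = j then 1 else 0 with he1
  have hrep : ∀ (h : (Fin 2 → ℝ) →ₗ[ℝ] ℝ) (x : Fin 2 → ℝ),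
      h x = x 0 * h e0 + x 1 * h e1 := by
    intro h x
    rw [LinearMap.pi_apply_eq_sum_univ h x, Fin.sum_univ_two]
    simp [he0, he1]
  set C : ℝ := |f e0| + |f e1| + |g e0| + |g e1| + 1 with hC
  have hCpos : 0 < C := by positivity
  set δ : ℝ := min (f x₀) ε / (2 * C) with hδdef
  have hδ : 0 < δ := div_pos (lt_min hfx₀pos hε) (by linarith)
  obtain ⟨q0, hq0⟩ := exists_rat_near (x₀ 0) hδ
  obtain ⟨q1, hq1⟩ := exists_rat_near (x₀ 1) hδ
  set qr : Fin 2 → ℝ := ![(q0 : ℝ), (q1 : ℝ)] with hqr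
  have hd0 : |qr 0 - x₀ 0| < δ := by
    rw [hqr]; simpa [abs_sub_comm] using hq0
  have hd1 : |qr 1 - x₀ 1| < δ := by
    rw [hqr]; simpa [abs_sub_comm] using hq1
  have hbound : ∀ (h : (Fin 2 → ℝ) →ₗ[ℝ] ℝ),
      |h qr - h x₀| ≤ δ * (|h e0| + |h e1|) := by
    intro h
    have h1 : h qr - h x₀ = (qr 0 - x₀ 0) * h e0 + (qr 1 - x₀ 1) * h e1 := by
      rw [hrep h qr, hrep h x₀]; ring
    rw [h1]
    calc |(qr 0 - x₀ 0) * h e0 + (qr 1 - x₀ 1) * h e1|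
        ≤ |(qr 0 - x₀ 0) * h e0| + |(qr 1 - x₀ 1) * h e1| := abs_add_le _ _
      _ ≤ δ * |h e0| + δ * |h e1| := by
          apply add_le_add
          · rw [abs_mul]; exact mul_le_mul_of_nonneg_right hd0.le (abs_nonneg _)
          · rw [abs_mul]; exact mul_le_mul_of_nonneg_right hd1.le (abs_nonneg _)
      _ = δ * (|h e0| + |h e1|) := by ring
  have hδC : δ * C = min (f x₀) ε / 2 := by
    rw [hδdef]; exact half_div_mul _ _ (ne_of_gt hCpos)
  have hmin1 : min (f x₀) ε ≤ f x₀ := min_le_left _ _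
  have hmin2 : min (f x₀) ε ≤ ε := min_le_right _ _
  clear_value s ε x₀ e0 e1 C δ qr
  have hfqr : 0 < f qr := by
    have hb := hbound f
    have h2 : δ * (|f e0| + |f e1|) ≤ δ * C := by
      apply mul_le_mul_of_nonneg_left _ hδ.le
      rw [hC]
      have := abs_nonneg (g e0); have := abs_nonneg (g e1); linarith
    have h3 := (abs_le.1 hb).1
    linarith
  have hgqr : g qr < 0 := by
    have hb := hbound g
    have h2 : δ * (|g e0| + |g e1|) ≤ δ * C := by
      apply mul_le_mul_of_nonneg_left _ hδ.le
      rw [hC]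
      have := abs_nonneg (f e0); have := abs_nonneg (f e1); linarith
    have h3 := (abs_le.1 hb).2
    have h4 : g qr ≤ g x₀ + δ * C := by linarith
    rw [hgx₀] at h4
    linarith
  -- clear denominators
  set w : Fin 2 → ℤ := ![q0.num * (q1.den : ℤ), q1.num * (q0.den : ℤ)] with hwdef
  set d : ℝ := (q0.den : ℝ) * (q1.den : ℝ) with hd
  have hden0 : ((q0.den : ℝ)) ≠ 0 := by
    exact_mod_cast q0.den_nz
  have hden1 : ((q1.den : ℝ)) ≠ 0 := by
    exact_mod_cast q1.den_nz
  have hdpos : 0 < d := by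
    rw [hd]
    have h0 : 0 < (q0.den : ℝ) := by positivity
    positivity
  have hwr : (fun i => ((w i : ℤ) : ℝ)) = d • qr := by
    funext i
    fin_cases i
    · show ((q0.num * (q1.den : ℤ) : ℤ) : ℝ) = d * (qr 0)
      rw [hqr]
      simp only [Matrix.cons_val_zero]
      push_cast
      rw [Rat.cast_def]
      field_simp [hd]
      ring
    · show ((q1.num * (q0.den : ℤ) : ℤ) : ℝ) = d * (qr 1)
      rw [hqr]
      simp only [Matrix.cons_val_one, Matrix.head_cons]
      push_cast
      rw [Rat.cast_def]
      field_simp [hd]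
      ring
  have hfw : 0 < f (fun i => ((w i : ℤ) : ℝ)) := by
    rw [hwr, map_smul]
    exact mul_pos hdpos hfqr
  have hgw := part1 w hfw
  rw [hwr, map_smul, smul_eq_mul] at hgw
  nlinarith


theorem recurrent_order_eigenfunctional {Γ : Type*} [Group Γ]
    (r : Γ → Γ → Prop) (hr : IsLeftInvariantOrder r)
    (ι : Multiplicative (Fin 2 → ℤ) →* Γ) (hι : Function.Injective ι)
    (f : (Fin 2 → ℝ) →ₗ[ℝ] ℝ) (hf : f ≠ 0)
    (hpos : ∀ v : Fin 2 → ℤ, 0 < f (fun i => (v i : ℝ)) →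
      r 1 (ι (Multiplicative.ofAdd v)))
    (T : Matrix.SpecialLinearGroup (Fin 2) ℤ) (Tbar : Γ)
    (hconj : ∀ v : Fin 2 → ℤ,
      Tbar * ι (Multiplicative.ofAdd v) * Tbar⁻¹ =
        ι (Multiplicative.ofAdd ((T : Matrix (Fin 2) (Fin 2) ℤ).mulVec v)))
    (α₁ α₂ : ℝ) (hα₁ : 1 < α₁) (hα₂0 : 0 < α₂) (hα₂1 : α₂ < 1)
    (v₁ v₂ : Fin 2 → ℝ)
    (heig₁ : ((T : Matrix (Fin 2) (Fin 2) ℤ).map (Int.cast : ℤ → ℝ)).mulVec v₁ = α₁ • v₁)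
    (heig₂ : ((T : Matrix (Fin 2) (Fin 2) ℤ).map (Int.cast : ℤ → ℝ)).mulVec v₂ = α₂ • v₂)
    (hindep : LinearIndependent ℝ ![v₁, v₂])
    (hfv₁ : 0 < f v₁)
    (g : (Fin 2 → ℝ) →ₗ[ℝ] ℝ) (hg₁ : g v₁ = 1) (hg₂ : g v₂ = 0)
    (hrec : ∀ γ ∈ ({Tbar, Tbar⁻¹} : Set Γ), ∀ (k : ℕ) (lam : Fin k → Γ),
      (∀ i j : Fin k, i < j → r (lam i) (lam j)) →
      ∀ N : ℕ, ∃ n : ℕ, N ≤ n ∧ 0 < n ∧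
        ∀ i j : Fin k, i < j → r (lam i * γ ^ n) (lam j * γ ^ n)) :
    (∀ v : Fin 2 → ℤ, 0 < f (fun i => (v i : ℝ)) → 0 ≤ g (fun i => (v i : ℝ))) ∧
    LinearMap.ker f = LinearMap.ker g ∧
    ∀ x : Fin 2 → ℝ, x ∈ LinearMap.ker f →
      ((T : Matrix (Fin 2) (Fin 2) ℤ).map (Int.cast : ℤ → ℝ)).mulVec x ∈ LinearMap.ker f := by
  obtain ⟨hirr, htrans, -, hlinv⟩ := hr
  set Tr : Matrix (Fin 2) (Fin 2) ℝ := (T : Matrix (Fin 2) (Fin 2) ℤ).map (Int.cast : ℤ → ℝ) with hTr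
  -- no element is both positive and its inverse positive
  have hne1 : ∀ x : Γ, r 1 x → r 1 x⁻¹ → False := by
    intro x h1 h2
    have := hlinv x 1 x⁻¹ h2
    rw [mul_one, mul_inv_cancel] at this
    exact hirr 1 (htrans 1 x 1 h1 this)
  -- powers of Tr on eigenvectors
  have hTpow1 : ∀ n : ℕ, (Tr ^ n).mulVec v₁ = (α₁ ^ n) • v₁ := by
    intro n
    induction n with
    | zero => simp [Matrix.one_mulVec]
    | succ n ih =>
      rw [pow_succ', pow_succ', ← Matrix.mulVec_mulVec, ih, Matrix.mulVec_smul, heig₁,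
        smul_smul, mul_comm]
  have hTpow2 : ∀ n : ℕ, (Tr ^ n).mulVec v₂ = (α₂ ^ n) • v₂ := by
    intro n
    induction n with
    | zero => simp [Matrix.one_mulVec]
    | succ n ih =>
      rw [pow_succ', pow_succ', ← Matrix.mulVec_mulVec, ih, Matrix.mulVec_smul, heig₂,
        smul_smul, mul_comm]
  -- basis
  have hcard : Fintype.card (Fin 2) = Module.finrank ℝ (Fin 2 → ℝ) := by simp
  let B : Module.Basis (Fin 2) ℝ (Fin 2 → ℝ) := basisOfLinearIndependentOfCardEqFinrank hindep hcard
  have hB0 : B 0 = v₁ := by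
    simp [B, coe_basisOfLinearIndependentOfCardEqFinrank]
  have hB1 : B 1 = v₂ := by
    simp [B, coe_basisOfLinearIndependentOfCardEqFinrank]
  have hdecomp : ∀ x : Fin 2 → ℝ, x = (B.repr x 0) • v₁ + (B.repr x 1) • v₂ := by
    intro x
    conv_lhs => rw [← B.sum_repr x]
    rw [Fin.sum_univ_two, hB0, hB1]
  have hg_repr : ∀ x : Fin 2 → ℝ, g x = B.repr x 0 := by
    intro x
    conv_lhs => rw [hdecomp x]
    simp [hg₁, hg₂]
  -- f applied to Tr^n x
  have hfT : ∀ (n : ℕ) (x : Fin 2 → ℝ),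
      f ((Tr ^ n).mulVec x) = (g x) * α₁ ^ n * f v₁ + (B.repr x 1) * α₂ ^ n * f v₂ := by
    intro n x
    conv_lhs => rw [hdecomp x]
    rw [Matrix.mulVec_add, Matrix.mulVec_smul, Matrix.mulVec_smul, hTpow1, hTpow2]
    simp [hg_repr]
    ring
  -- conjugation iterated
  have hconjn : ∀ (n : ℕ) (v : Fin 2 → ℤ),
      Tbar ^ n * ι (Multiplicative.ofAdd v) * (Tbar ^ n)⁻¹ =
        ι (Multiplicative.ofAdd (((T : Matrix (Fin 2) (Fin 2) ℤ) ^ n).mulVec v)) := by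
    intro n
    induction n with
    | zero => intro v; simp [Matrix.one_mulVec]
    | succ n ih =>
      intro v
      have h1 : Tbar ^ (n + 1) * ι (Multiplicative.ofAdd v) * (Tbar ^ (n + 1))⁻¹ =
          Tbar ^ n * (Tbar * ι (Multiplicative.ofAdd v) * Tbar⁻¹) * (Tbar ^ n)⁻¹ := by
        rw [pow_succ]
        group
      rw [h1, hconj, ih, pow_succ, ← Matrix.mulVec_mulVec]
  -- for v positive: infinitely many n with 0 ≤ f(Tⁿ v)
  have hkey : ∀ v : Fin 2 → ℤ, 0 < f (fun i => (v i : ℝ)) → ∀ N : ℕ, ∃ n : ℕ, N ≤ n ∧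
      0 ≤ f ((Tr ^ n).mulVec (fun i => (v i : ℝ))) := by
    intro v hv N
    have hchain : ∀ i j : Fin 2, i < j →
        r (![1, ι (Multiplicative.ofAdd v)] i) (![1, ι (Multiplicative.ofAdd v)] j) := by
      intro i j hij
      have hi2 := i.isLt
      have hj2 := j.isLt
      have hij' : (i : ℕ) < (j : ℕ) := hij
      have hi0 : i = 0 := Fin.ext (by omega)
      have hj1 : j = 1 := Fin.ext (by omega)
      subst hi0 hj1
      simpa using hpos v hv
    obtain ⟨n, hnN, -, hch⟩ := hrec Tbar⁻¹ (by simp) 2 ![1, ι (Multiplicative.ofAdd v)] hchain N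
    have h01 := hch 0 1 (by norm_num)
    simp only [Matrix.cons_val_zero, Matrix.cons_val_one, Matrix.head_cons, one_mul] at h01
    -- left translate by Tbar ^ n
    have h2 := hlinv (Tbar ^ n) _ _ h01
    rw [inv_pow, mul_inv_cancel] at h2
    have h3 : Tbar ^ n * (ι (Multiplicative.ofAdd v) * (Tbar ^ n)⁻¹) =
        Tbar ^ n * ι (Multiplicative.ofAdd v) * (Tbar ^ n)⁻¹ := by group
    rw [h3, hconjn n v] at h2
    refine ⟨n, hnN, ?_⟩
    by_contra hneg
    push_neg at hneg
    set w := ((T : Matrix (Fin 2) (Fin 2) ℤ) ^ n).mulVec v with hw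
    have hcast : (fun i => ((w i : ℤ) : ℝ)) = (Tr ^ n).mulVec (fun i => (v i : ℝ)) := by
      rw [hw, castVec, castPow]
    have hfneg : 0 < f (fun i => ((-w) i : ℝ)) := by
      have : (fun i => (((-w) i : ℤ) : ℝ)) = -(fun i => ((w i : ℤ) : ℝ)) := by
        funext i; simp
      rw [this, map_neg, hcast]
      linarith
    have h4 := hpos (-w) hfneg
    have h5 : ι (Multiplicative.ofAdd (-w)) = (ι (Multiplicative.ofAdd w))⁻¹ := by
      rw [← map_inv]; rfl
    rw [h5] at h4
    exact hne1 _ h2 h4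
  -- Part 1
  have part1 : ∀ v : Fin 2 → ℤ, 0 < f (fun i => (v i : ℝ)) → 0 ≤ g (fun i => (v i : ℝ)) := by
    intro v hv
    by_contra hg
    push_neg at hg
    set vr : Fin 2 → ℝ := fun i => (v i : ℝ) with hvr
    set a : ℝ := g vr with ha
    set b : ℝ := B.repr vr 1 with hb
    have hafv : a * f v₁ < 0 := mul_neg_of_neg_of_pos hg hfv₁
    obtain ⟨N, hN⟩ := pow_unbounded_of_one_lt (|b * f v₂| / (-(a * f v₁))) hα₁
    obtain ⟨n, hnN, hfn⟩ := hkey v hv N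
    rw [hfT n vr] at hfn
    have hα₁n : α₁ ^ N ≤ α₁ ^ n := pow_le_pow_right₀ (le_of_lt hα₁) hnN
    have hb2 : |b * f v₂| < -(a * f v₁) * α₁ ^ N := by
      rw [div_lt_iff₀ (by linarith)] at hN
      linarith [hN]
    have hterm1 : a * α₁ ^ n * f v₁ ≤ a * α₁ ^ N * f v₁ := by
      nlinarith
    have hterm2 : b * α₂ ^ n * f v₂ ≤ |b * f v₂| := by
      have h1 : b * α₂ ^ n * f v₂ ≤ |b * α₂ ^ n * f v₂| := le_abs_self _
      have h2 : |b * α₂ ^ n * f v₂| = |b * f v₂| * |α₂| ^ n := by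
        rw [abs_mul, abs_mul, abs_mul, abs_pow]; ring
      have h3 : |α₂| ^ n ≤ 1 := pow_le_one₀ (abs_nonneg _) (by rw [abs_of_pos hα₂0]; linarith)
      nlinarith [abs_nonneg (b * f v₂)]
    nlinarith
  -- f v₂ = 0 via rational approximation
  have hfv₂ : f v₂ = 0 := density_step f g v₁ v₂ hfv₁ hg₁ hg₂ part1
  -- f x = g x * f v₁
  have hfg : ∀ x : Fin 2 → ℝ, f x = g x * f v₁ := by
    intro x
    conv_lhs => rw [hdecomp x]
    simp [hfv₂, hg_repr]
  refine ⟨part1, ?_, ?_⟩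
  · ext x
    simp only [LinearMap.mem_ker]
    rw [hfg x]
    constructor
    · intro h
      rcases mul_eq_zero.1 h with h | h
      · exact h
      · exact absurd h (ne_of_gt hfv₁)
    · intro h; rw [h, zero_mul]
  · intro x hx
    rw [LinearMap.mem_ker, ← hTr] at *
    have hgx : g x = 0 := by
      have := hfg x
      rw [hx] at this
      rcases mul_eq_zero.1 this.symm with h | h
      · exact h
      · exact absurd h (ne_of_gt hfv₁)
    have hx2 : x = (B.repr x 1) • v₂ := by
      conv_lhs => rw [hdecomp x]
      rw [← hg_repr, hgx, zero_smul, zero_add]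
    rw [hfg]
    have : Tr.mulVec x = (B.repr x 1) • (α₂ • v₂) := by
      conv_lhs => rw [hx2]
      rw [Matrix.mulVec_smul, heig₂]
    rw [this]
    simp [hg₂]
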